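/- Let A > 0 with A ≤ 1/(2e) and let ε > 0 with ε ≤ 2. If r is a positive integer with r ≥ log(2ε⁻¹)/log(1/(eA)), then for all x ∈ [−A, A] and y ∈ [−1, 1] one has |e^{ixy} − Σ_{n=0}^{r−1} (iⁿ/n!) xⁿ yⁿ| ≤ ε. In particular, the ε-separation rank of e^{ixy} on [−A,A] × [−1,1] is at most 1 + log(2ε⁻¹)/log(1/(eA)). -/

import Mathlib

open scoped BigOperators

theorem stmt_1 (A ε : ℝ) (hA : 0 < A) (hA2 : A ≤ 1 / (2 * Real.exp 1))
    (hε : 0 < ε) (hε2 : ε ≤ 2) :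
    (∀ r : ℕ, 0 < r →
      Real.log (2 / ε) / Real.log (1 / (Real.exp 1 * A)) ≤ (r : ℝ) →
      ∀ x ∈ Set.Icc (-A) A, ∀ y ∈ Set.Icc (-1 : ℝ) 1,
        ‖(Complex.exp (Complex.I * (x : ℂ) * (y : ℂ)) -
          ∑ n ∈ Finset.range r,
            Complex.I ^ n / (n.factorial : ℂ) * (x : ℂ) ^ n * (y : ℂ) ^ n)‖ ≤ ε) ∧
    (∃ r : ℕ, (r : ℝ) ≤ 1 + Real.log (2 / ε) / Real.log (1 / (Real.exp 1 * A)) ∧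
      ∃ (c : Fin r → ℝ → ℂ) (d : Fin r → ℝ → ℂ),
        ∀ x ∈ Set.Icc (-A) A, ∀ y ∈ Set.Icc (-1 : ℝ) 1,
          ‖(Complex.exp (Complex.I * (x : ℂ) * (y : ℂ)) -
            ∑ n, c n x * d n y)‖ ≤ ε) := by
  have he1 : (1 : ℝ) ≤ Real.exp 1 := Real.one_le_exp (by norm_num)
  have heA : 0 < Real.exp 1 * A := by positivity
  have heA2 : Real.exp 1 * A ≤ 1 / 2 := by
    have he0 : (0:ℝ) < Real.exp 1 := Real.exp_pos 1
    calc Real.exp 1 * A ≤ Real.exp 1 * (1 / (2 * Real.exp 1)) := by gcongr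
      _ = 1 / 2 := by field_simp
  have hL' : 0 < Real.log (1 / (Real.exp 1 * A)) := by
    apply Real.log_pos
    rw [lt_div_iff₀ heA, one_mul]
    linarith
  have key : ∀ r : ℕ, 0 < r →
      Real.log (2 / ε) / Real.log (1 / (Real.exp 1 * A)) ≤ (r : ℝ) →
      ∀ x ∈ Set.Icc (-A) A, ∀ y ∈ Set.Icc (-1 : ℝ) 1,
        ‖(Complex.exp (Complex.I * (x : ℂ) * (y : ℂ)) -
          ∑ n ∈ Finset.range r,
            Complex.I ^ n / (n.factorial : ℂ) * (x : ℂ) ^ n * (y : ℂ) ^ n)‖ ≤ ε := by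
    intro r hr hrL x hx y hy
    have hxA : |x| ≤ A := abs_le.2 hx
    have hy1 : |y| ≤ 1 := abs_le.2 hy
    set z : ℂ := Complex.I * (x : ℂ) * (y : ℂ) with hz
    have habsz : ‖z‖ ≤ A := by
      have : ‖z‖ = |x| * |y| := by
        simp [hz]
      rw [this]
      calc |x| * |y| ≤ A * 1 := by
            exact mul_le_mul hxA hy1 (abs_nonneg _) (le_of_lt hA)
        _ = A := mul_one A
    have hAhalf : A ≤ 1 / 2 := by
      calc A = 1 * A := (one_mul A).symm
        _ ≤ Real.exp 1 * A := by gcongr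
        _ ≤ 1 / 2 := heA2
    have hsum : (∑ n ∈ Finset.range r,
        Complex.I ^ n / (n.factorial : ℂ) * (x : ℂ) ^ n * (y : ℂ) ^ n)
        = ∑ n ∈ Finset.range r, z ^ n / (n.factorial : ℂ) := by
      refine Finset.sum_congr rfl fun n _ => ?_
      rw [hz, mul_pow, mul_pow]
      ring
    rw [hsum]
    have hb : ‖z‖ / (r + 1 : ℕ) ≤ 1 / 2 := by
      have : ‖z‖ ≤ 1 / 2 := habsz.trans hAhalf
      have h1 : (1:ℝ) ≤ ((r + 1 : ℕ) : ℝ) := by exact_mod_cast Nat.one_le_iff_ne_zero.2 (Nat.succ_ne_zero r)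
      calc ‖z‖ / ((r + 1 : ℕ) : ℝ) ≤ ‖z‖ / 1 := by
            apply div_le_div_of_nonneg_left (norm_nonneg _) one_pos h1
        _ = ‖z‖ := div_one _
        _ ≤ 1 / 2 := this
    have hbound := Complex.exp_bound' (x := z) (n := r) hb
    refine hbound.trans ?_
    -- abs z ^ r / r! * 2 ≤ 2 * A ^ r ≤ 2 * (e*A)^r ≤ ε
    have h1 : ‖z‖ ^ r / (r.factorial : ℝ) * 2 ≤ 2 * (Real.exp 1 * A) ^ r := by
      have hfac : (1:ℝ) ≤ (r.factorial : ℝ) := by exact_mod_cast r.factorial_pos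
      have hzr : ‖z‖ ^ r ≤ A ^ r := by
        exact pow_le_pow_left₀ (norm_nonneg _) habsz r
      have hAe : A ^ r ≤ (Real.exp 1 * A) ^ r := by
        apply pow_le_pow_left₀ (le_of_lt hA)
        calc A = 1 * A := (one_mul A).symm
          _ ≤ Real.exp 1 * A := by gcongr
      calc ‖z‖ ^ r / (r.factorial : ℝ) * 2
          ≤ A ^ r / 1 * 2 := by gcongr
        _ = 2 * A ^ r := by ring
        _ ≤ 2 * (Real.exp 1 * A) ^ r := by gcongr
    refine h1.trans ?_
    -- 2 * (e*A)^r ≤ ε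
    have hlog : Real.log (2 / ε) ≤ (r : ℝ) * Real.log (1 / (Real.exp 1 * A)) := by
      rw [div_le_iff₀ hL'] at hrL
      linarith
    have hEA : (Real.exp 1 * A) ^ r ≤ ε / 2 := by
      rw [← Real.log_le_log_iff (pow_pos heA r) (by positivity), Real.log_pow]
      push_cast
      have h4 : Real.log (1 / (Real.exp 1 * A)) = -Real.log (Real.exp 1 * A) := by
        rw [one_div, Real.log_inv]
      have h5 : Real.log (2 / ε) = -Real.log (ε / 2) := by
        rw [← Real.log_inv, inv_div]
      rw [h4] at hlog
      rw [h5] at hlog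
      linarith
    linarith
  refine ⟨key, ?_⟩
  set L := Real.log (2 / ε) / Real.log (1 / (Real.exp 1 * A)) with hLdef
  have hL0 : 0 ≤ L := by
    apply div_nonneg _ (le_of_lt hL')
    apply Real.log_nonneg
    rw [le_div_iff₀ hε]
    linarith
  refine ⟨⌊L⌋₊ + 1, ?_, ?_⟩
  · push_cast
    have := Nat.floor_le hL0
    linarith
  · refine ⟨fun n x => Complex.I ^ (n : ℕ) / ((n : ℕ).factorial : ℂ) * (x : ℂ) ^ (n : ℕ),
      fun n y => (y : ℂ) ^ (n : ℕ), ?_⟩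
    intro x hx y hy
    have hsum : (∑ n : Fin (⌊L⌋₊ + 1),
        Complex.I ^ (n : ℕ) / ((n : ℕ).factorial : ℂ) * (x : ℂ) ^ (n : ℕ) * (y : ℂ) ^ (n : ℕ))
        = ∑ n ∈ Finset.range (⌊L⌋₊ + 1),
          Complex.I ^ n / (n.factorial : ℂ) * (x : ℂ) ^ n * (y : ℂ) ^ n := by
      exact Fin.sum_univ_eq_sum_range
        (fun n => Complex.I ^ n / (n.factorial : ℂ) * (x : ℂ) ^ n * (y : ℂ) ^ n) _
    rw [hsum]
    apply key (⌊L⌋₊ + 1) (Nat.succ_pos _) _ x hx y hy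
    push_cast
    have := Nat.lt_floor_add_one L
    linarith
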